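/- (Audenaert's inequality.) Let 1 < α < ∞ and let ρ be a density matrix on ℂ^{d_A} ⊗ ℂ^{d_B} with marginals ρ_A, ρ_B. Then ‖ρ_A‖_α + ‖ρ_B‖_α ≤ 1 + ‖ρ‖_α. -/

import Mathlib

noncomputable section
open scoped ComplexOrder Kronecker

/-- A density matrix: positive semidefinite with unit trace. -/
def IsDensityMatrix {ι : Type*} [Fintype ι] (ρ : Matrix ι ι ℂ) : Prop :=
  ρ.PosSemidef ∧ ρ.trace = 1

/-- Marginal on system `A` of a bipartite matrix. -/
def margA {dA dB : ℕ} (ρ : Matrix (Fin dA × Fin dB) (Fin dA × Fin dB) ℂ) :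
    Matrix (Fin dA) (Fin dA) ℂ :=
  fun a a' => ∑ b, ρ (a, b) (a', b)

/-- Marginal on system `B` of a bipartite matrix. -/
def margB {dA dB : ℕ} (ρ : Matrix (Fin dA × Fin dB) (Fin dA × Fin dB) ℂ) :
    Matrix (Fin dB) (Fin dB) ℂ :=
  fun b b' => ∑ a, ρ (a, b) (a, b')


/-- Schatten α-norm of a (Hermitian, PSD) matrix, via its eigenvalues. -/
def schattenNorm {ι : Type*} [Fintype ι] [DecidableEq ι] (α : ℝ)
    (σ : Matrix ι ι ℂ) : ℝ :=
  if h : σ.IsHermitian then (∑ i, h.eigenvalues i ^ α) ^ (1 / α) else 0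

/-- Operator (∞-Schatten) norm of a (Hermitian, PSD) matrix: its largest eigenvalue. -/
def schattenInftyNorm {ι : Type*} [Fintype ι] [DecidableEq ι]
    (σ : Matrix ι ι ℂ) : ℝ :=
  if h : σ.IsHermitian then ⨆ i, h.eigenvalues i else 0


open Complex Matrix

private lemma swap3 {β γ δ : Type*} [Fintype β] [Fintype γ] [Fintype δ] (f : β → γ → δ → ℂ) :
    ∑ j : β, ∑ x : γ, ∑ y : δ, f j x y = ∑ x, ∑ y, ∑ j, f j x y := by
  rw [Finset.sum_comm]; exact Finset.sum_congr rfl fun x _ => Finset.sum_comm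

private lemma kron_conjT {m n : Type*} [Fintype m] [Fintype n] (A : Matrix m m ℂ) (B : Matrix n n ℂ) :
    (A ⊗ₖ B)ᴴ = Aᴴ ⊗ₖ Bᴴ := by
  ext x y
  simp [Matrix.conjTranspose_apply, Matrix.kroneckerMap_apply, star_mul']

private lemma conj_diag_entry {ι κ : Type*} [Fintype ι] [Fintype κ] [DecidableEq κ]
    (N : Matrix ι κ ℂ) (d : κ → ℝ) (x y : ι) :
    (N * Matrix.diagonal (fun k => (d k : ℂ)) * Nᴴ) x y
      = ∑ k, (d k : ℂ) * (N x k * (starRingEnd ℂ) (N y k)) := by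
  simp only [Matrix.mul_apply, Matrix.mul_diagonal, Matrix.conjTranspose_apply, Matrix.diagonal_apply]
  refine Finset.sum_congr rfl fun k _ => ?_
  simp [Matrix.mul_apply, Matrix.mul_diagonal, Matrix.conjTranspose_apply]
  ring

private lemma trace_eq_sum_eig {ι : Type*} [Fintype ι] [DecidableEq ι] {A : Matrix ι ι ℂ}
    (hA : A.IsHermitian) : A.trace = ∑ i, (hA.eigenvalues i : ℂ) := by
  exact hA.trace_eq_sum_eigenvalues

private lemma collapse {n m : Type*} [Fintype n] [Fintype m] [DecidableEq m] (f : n → m → m → ℂ) :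
    ∑ b' : m, ∑ a : n, ∑ b : m, f a b b' * (if b' = b then 1 else 0) = ∑ a, ∑ b, f a b b := by
  rw [Finset.sum_comm]
  refine Finset.sum_congr rfl fun a _ => ?_
  rw [Finset.sum_comm]
  refine Finset.sum_congr rfl fun b _ => ?_
  simp

private lemma margA_conj {dA dB : ℕ} (ρ : Matrix (Fin dA × Fin dB) (Fin dA × Fin dB) ℂ)
    (A : Matrix (Fin dA) (Fin dA) ℂ) (B : Matrix (Fin dB) (Fin dB) ℂ)
    (hB : B * Bᴴ = 1) :
    margA ((A ⊗ₖ B)ᴴ * ρ * (A ⊗ₖ B)) = Aᴴ * margA ρ * A := by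
  have hB' : ∀ b b' : Fin dB, ∑ j, B b' j * star (B b j) = if b' = b then 1 else 0 := by
    intro b b'
    have := congrFun (congrFun hB b') b
    simpa [Matrix.mul_apply, Matrix.one_apply, Matrix.conjTranspose_apply] using this
  ext i i'
  show ∑ j, ((A ⊗ₖ B)ᴴ * ρ * (A ⊗ₖ B)) (i, j) (i', j) = _
  calc ∑ j, ((A ⊗ₖ B)ᴴ * ρ * (A ⊗ₖ B)) (i, j) (i', j)
      = ∑ j, ∑ y : Fin dA × Fin dB, ∑ x : Fin dA × Fin dB,
          (star (A x.1 i) * star (B x.2 j) * ρ x y) * (A y.1 i' * B y.2 j) := by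
        refine Finset.sum_congr rfl fun j _ => ?_
        simp [Matrix.mul_apply, Matrix.conjTranspose_apply, Matrix.kroneckerMap_apply,
          Finset.sum_mul, star_mul']
    _ = ∑ y : Fin dA × Fin dB, ∑ x : Fin dA × Fin dB, ∑ j,
          (star (A x.1 i) * star (B x.2 j) * ρ x y) * (A y.1 i' * B y.2 j) := swap3 _
    _ = ∑ y : Fin dA × Fin dB, ∑ x : Fin dA × Fin dB,
          (star (A x.1 i) * ρ x y * A y.1 i') * (if y.2 = x.2 then 1 else 0) := by
        refine Finset.sum_congr rfl fun y _ => Finset.sum_congr rfl fun x _ => ?_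
        rw [← hB' x.2 y.2, Finset.mul_sum]
        exact Finset.sum_congr rfl fun j _ => by ring
    _ = ∑ a' : Fin dA, ∑ b' : Fin dB, ∑ a : Fin dA, ∑ b : Fin dB,
          (star (A a i) * ρ (a, b) (a', b') * A a' i') * (if b' = b then 1 else 0) := by
        rw [Fintype.sum_prod_type]
        exact Finset.sum_congr rfl fun a' _ => Finset.sum_congr rfl fun b' _ =>
          Fintype.sum_prod_type ..
    _ = ∑ a' : Fin dA, ∑ a : Fin dA, ∑ b : Fin dB,
          star (A a i) * ρ (a, b) (a', b) * A a' i' := by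
        exact Finset.sum_congr rfl fun a' _ =>
          collapse (fun a b b' => star (A a i) * ρ (a, b) (a', b') * A a' i')
    _ = (Aᴴ * margA ρ * A) i i' := by
        simp only [Matrix.mul_apply, Matrix.conjTranspose_apply, margA, Finset.sum_mul,
          Finset.mul_sum]

private lemma collapse2 {n m : Type*} [Fintype n] [Fintype m] [DecidableEq m] (f : m → n → m → ℂ) :
    ∑ a' : m, ∑ a : m, ∑ b : n, f a b a' * (if a' = a then 1 else 0) = ∑ a, ∑ b, f a b a := by
  rw [Finset.sum_comm]
  refine Finset.sum_congr rfl fun a _ => ?_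
  rw [Finset.sum_comm]
  refine Finset.sum_congr rfl fun b _ => ?_
  simp

private lemma margB_conj {dA dB : ℕ} (ρ : Matrix (Fin dA × Fin dB) (Fin dA × Fin dB) ℂ)
    (A : Matrix (Fin dA) (Fin dA) ℂ) (B : Matrix (Fin dB) (Fin dB) ℂ)
    (hA : A * Aᴴ = 1) :
    margB ((A ⊗ₖ B)ᴴ * ρ * (A ⊗ₖ B)) = Bᴴ * margB ρ * B := by
  have hA' : ∀ a a' : Fin dA, ∑ i, A a' i * star (A a i) = if a' = a then 1 else 0 := by
    intro a a'
    have := congrFun (congrFun hA a') a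
    simpa [Matrix.mul_apply, Matrix.one_apply, Matrix.conjTranspose_apply] using this
  ext j j'
  show ∑ i, ((A ⊗ₖ B)ᴴ * ρ * (A ⊗ₖ B)) (i, j) (i, j') = _
  calc ∑ i, ((A ⊗ₖ B)ᴴ * ρ * (A ⊗ₖ B)) (i, j) (i, j')
      = ∑ i, ∑ y : Fin dA × Fin dB, ∑ x : Fin dA × Fin dB,
          (star (A x.1 i) * star (B x.2 j) * ρ x y) * (A y.1 i * B y.2 j') := by
        refine Finset.sum_congr rfl fun i _ => ?_
        simp [Matrix.mul_apply, Matrix.conjTranspose_apply, Matrix.kroneckerMap_apply,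
          Finset.sum_mul, star_mul']
    _ = ∑ y : Fin dA × Fin dB, ∑ x : Fin dA × Fin dB, ∑ i,
          (star (A x.1 i) * star (B x.2 j) * ρ x y) * (A y.1 i * B y.2 j') := swap3 _
    _ = ∑ y : Fin dA × Fin dB, ∑ x : Fin dA × Fin dB,
          (star (B x.2 j) * ρ x y * B y.2 j') * (if y.1 = x.1 then 1 else 0) := by
        refine Finset.sum_congr rfl fun y _ => Finset.sum_congr rfl fun x _ => ?_
        rw [← hA' x.1 y.1, Finset.mul_sum]
        exact Finset.sum_congr rfl fun i _ => by ring
    _ = ∑ b' : Fin dB, ∑ b : Fin dB, ∑ a : Fin dA,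
          star (B b j) * ρ (a, b) (a, b') * B b' j' := by
        rw [Fintype.sum_prod_type]
        rw [Finset.sum_comm]
        refine Finset.sum_congr rfl fun b' _ => ?_
        calc ∑ a' : Fin dA, ∑ x : Fin dA × Fin dB,
              (star (B x.2 j) * ρ x (a', b') * B b' j') * (if a' = x.1 then 1 else 0)
            = ∑ a' : Fin dA, ∑ a : Fin dA, ∑ b : Fin dB,
              (star (B b j) * ρ (a, b) (a', b') * B b' j') * (if a' = a then 1 else 0) := by
              exact Finset.sum_congr rfl fun a' _ => Fintype.sum_prod_type ..
          _ = ∑ b : Fin dB, ∑ a : Fin dA, star (B b j) * ρ (a, b) (a, b') * B b' j' := by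
              rw [collapse2 (fun a b a' => star (B b j) * ρ (a, b) (a', b') * B b' j')]
              exact Finset.sum_comm
    _ = (Bᴴ * margB ρ * B) j j' := by
        simp only [Matrix.mul_apply, Matrix.conjTranspose_apply, margB, Finset.sum_mul,
          Finset.mul_sum]

private lemma sideA {n : ℕ} (lam : Fin n → ℝ) (hnn : ∀ i, 0 ≤ lam i) (h1 : ∑ i, lam i = 1)
    {α : ℝ} (hα : 1 < α) :
    ∃ x : Fin n → ℝ, (∀ i, 0 ≤ x i) ∧ (∀ i, x i ≤ 1) ∧
      (∑ i, lam i * x i = (∑ i, lam i ^ α) ^ (1/α)) ∧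
      (∑ i, x i ^ (α/(α-1)) = 1) := by
  have hα0 : (0:ℝ) < α := lt_trans one_pos hα
  have hαne : α ≠ 0 := ne_of_gt hα0
  have hα1 : (0:ℝ) < α - 1 := by linarith
  have hα1ne : α - 1 ≠ 0 := ne_of_gt hα1
  set S := ∑ i, lam i ^ α with hSdef
  have hterm_nn : ∀ i : Fin n, 0 ≤ lam i ^ α := fun i => Real.rpow_nonneg (hnn i) α
  have hSnn : 0 ≤ S := Finset.sum_nonneg fun i _ => hterm_nn i
  have hSpos : 0 < S := by
    rcases hSnn.lt_or_eq with h | h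
    · exact h
    · exfalso
      have hz : ∀ i ∈ Finset.univ, lam i ^ α = 0 :=
        (Finset.sum_eq_zero_iff_of_nonneg (fun i _ => hterm_nn i)).mp h.symm
      have : ∑ i, lam i = 0 := Finset.sum_eq_zero fun i _ =>
        (Real.rpow_eq_zero (hnn i) hαne).mp (hz i (Finset.mem_univ i))
      rw [h1] at this; norm_num at this
  set NA := S ^ (1/α) with hNAdef
  have hNApos : 0 < NA := Real.rpow_pos_of_pos hSpos _
  have hNA1pos : 0 < NA ^ (α - 1) := Real.rpow_pos_of_pos hNApos _
  have hNAα : NA ^ α = S := by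
    rw [hNAdef, ← Real.rpow_mul hSnn, one_div_mul_cancel hαne, Real.rpow_one]
  refine ⟨fun i => lam i ^ (α-1) / NA ^ (α-1), fun i => ?_, fun i => ?_, ?_, ?_⟩
  · exact div_nonneg (Real.rpow_nonneg (hnn i) _) hNA1pos.le
  · -- x i ≤ 1
    rw [div_le_one hNA1pos]
    refine Real.rpow_le_rpow (hnn i) ?_ hα1.le
    have h2 : lam i ^ α ≤ S := Finset.single_le_sum (fun j _ => hterm_nn j) (Finset.mem_univ i)
    calc lam i = (lam i ^ α) ^ (1/α) := by
          rw [← Real.rpow_mul (hnn i), mul_one_div_cancel hαne, Real.rpow_one]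
      _ ≤ S ^ (1/α) := Real.rpow_le_rpow (hterm_nn i) h2 (by positivity)
      _ = NA := rfl
  · -- ∑ lam * x = NA
    have hterm : ∀ i : Fin n, lam i * lam i ^ (α-1) = lam i ^ α := by
      intro i
      rcases (hnn i).lt_or_eq with h | h
      · conv_rhs => rw [show α = 1 + (α-1) by ring]
        rw [Real.rpow_add h, Real.rpow_one]
      · rw [← h, Real.zero_rpow hαne, zero_mul]
    calc ∑ i, lam i * (lam i ^ (α-1) / NA ^ (α-1))
        = ∑ i, lam i ^ α / NA ^ (α-1) :=
          Finset.sum_congr rfl fun i _ => by rw [mul_div_assoc', hterm i]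
      _ = (∑ i, lam i ^ α) / NA ^ (α-1) := by rw [← Finset.sum_div]
      _ = NA ^ α / NA ^ (α-1) := by rw [← hSdef, hNAα]
      _ = NA := by rw [← Real.rpow_sub hNApos]; norm_num
  · -- ∑ x ^ q = 1
    have hq' : (α - 1) * (α/(α-1)) = α := by field_simp
    have hx : ∀ i : Fin n, (lam i ^ (α-1) / NA ^ (α-1)) ^ (α/(α-1)) = lam i ^ α / S := by
      intro i
      rw [Real.div_rpow (Real.rpow_nonneg (hnn i) _) hNA1pos.le,
        ← Real.rpow_mul (hnn i), ← Real.rpow_mul hNApos.le, hq', hNAα]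
    rw [Finset.sum_congr rfl fun i _ => hx i, ← Finset.sum_div, ← hSdef,
      div_self (ne_of_gt hSpos)]

/-- Audenaert's inequality: `‖ρ_A‖_α + ‖ρ_B‖_α ≤ 1 + ‖ρ_AB‖_α` for `α > 1`. -/
theorem audenaert_inequality {dA dB : ℕ} (α : ℝ) (hα : 1 < α)
    (ρ : Matrix (Fin dA × Fin dB) (Fin dA × Fin dB) ℂ) (hρ : IsDensityMatrix ρ) :
    schattenNorm α (margA ρ) + schattenNorm α (margB ρ)
      ≤ 1 + schattenNorm α ρ := by
  obtain ⟨hPSD, htr⟩ := hρ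
  have hH : ρ.IsHermitian := hPSD.1
  have hα0 : (0:ℝ) < α := lt_trans one_pos hα
  have hαne : α ≠ 0 := ne_of_gt hα0
  have hAh : (margA ρ).IsHermitian := by
    ext a a'
    show star (margA ρ a' a) = margA ρ a a'
    rw [show margA ρ a' a = ∑ b, ρ (a', b) (a, b) from rfl, star_sum]
    exact Finset.sum_congr rfl fun b _ => hH.apply (a, b) (a', b)
  have hBh : (margB ρ).IsHermitian := by
    ext b b'
    show star (margB ρ b' b) = margB ρ b b'
    rw [show margB ρ b' b = ∑ a, ρ (a, b') (a, b) from rfl, star_sum]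
    exact Finset.sum_congr rfl fun a _ => hH.apply (a, b) (a, b')
  -- eigen data
  set e : Fin dA × Fin dB → ℝ := hH.eigenvalues with hedef
  set lam : Fin dA → ℝ := hAh.eigenvalues with hlamdef
  set mu : Fin dB → ℝ := hBh.eigenvalues with hmudef
  have he : ∀ k, 0 ≤ e k := fun k => hPSD.eigenvalues_nonneg k
  set U : Matrix (Fin dA × Fin dB) (Fin dA × Fin dB) ℂ := (hH.eigenvectorUnitary : Matrix (Fin dA × Fin dB) (Fin dA × Fin dB) ℂ) with hUdef
  set UA : Matrix (Fin dA) (Fin dA) ℂ := (hAh.eigenvectorUnitary : Matrix (Fin dA) (Fin dA) ℂ) with hUAdef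
  set UB : Matrix (Fin dB) (Fin dB) ℂ := (hBh.eigenvectorUnitary : Matrix (Fin dB) (Fin dB) ℂ) with hUBdef
  have hU1 : U * Uᴴ = 1 := by
    rw [← Matrix.star_eq_conjTranspose]
    exact Matrix.mem_unitaryGroup_iff.mp hH.eigenvectorUnitary.2
  have hU2 : Uᴴ * U = 1 := by
    rw [← Matrix.star_eq_conjTranspose]
    exact Matrix.mem_unitaryGroup_iff'.mp hH.eigenvectorUnitary.2
  have hUA1 : UA * UAᴴ = 1 := by
    rw [← Matrix.star_eq_conjTranspose]
    exact Matrix.mem_unitaryGroup_iff.mp hAh.eigenvectorUnitary.2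
  have hUA2 : UAᴴ * UA = 1 := by
    rw [← Matrix.star_eq_conjTranspose]
    exact Matrix.mem_unitaryGroup_iff'.mp hAh.eigenvectorUnitary.2
  have hUB1 : UB * UBᴴ = 1 := by
    rw [← Matrix.star_eq_conjTranspose]
    exact Matrix.mem_unitaryGroup_iff.mp hBh.eigenvectorUnitary.2
  have hUB2 : UBᴴ * UB = 1 := by
    rw [← Matrix.star_eq_conjTranspose]
    exact Matrix.mem_unitaryGroup_iff'.mp hBh.eigenvectorUnitary.2
  have hspec : ρ = U * Matrix.diagonal (fun k => (e k : ℂ)) * Uᴴ := hH.spectral_theorem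
  have hspecA : margA ρ = UA * Matrix.diagonal (fun i => (lam i : ℂ)) * UAᴴ :=
    hAh.spectral_theorem
  have hspecB : margB ρ = UB * Matrix.diagonal (fun j => (mu j : ℂ)) * UBᴴ :=
    hBh.spectral_theorem
  -- the unitary V and weights
  set V : Matrix (Fin dA × Fin dB) (Fin dA × Fin dB) ℂ := (UA ⊗ₖ UB)ᴴ * U with hVdef
  have hM1 : (UA ⊗ₖ UB) * (UA ⊗ₖ UB)ᴴ = 1 := by
    rw [kron_conjT, ← Matrix.mul_kronecker_mul, hUA1, hUB1, Matrix.one_kronecker_one]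
  have hM2 : (UA ⊗ₖ UB)ᴴ * (UA ⊗ₖ UB) = 1 := by
    rw [kron_conjT, ← Matrix.mul_kronecker_mul, hUA2, hUB2, Matrix.one_kronecker_one]
  have hVH : Vᴴ = Uᴴ * (UA ⊗ₖ UB) := by
    rw [hVdef, Matrix.conjTranspose_mul, Matrix.conjTranspose_conjTranspose]
  have hV1 : V * Vᴴ = 1 := by
    rw [hVH, hVdef, Matrix.mul_assoc, ← Matrix.mul_assoc U Uᴴ _, hU1, Matrix.one_mul, hM2]
  have hV2 : Vᴴ * V = 1 := by
    rw [hVH, hVdef, Matrix.mul_assoc, ← Matrix.mul_assoc _ (UA ⊗ₖ UB)ᴴ U, hM1,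
      Matrix.one_mul, hU2]
  have hQdiag : (UA ⊗ₖ UB)ᴴ * ρ * (UA ⊗ₖ UB) = V * Matrix.diagonal (fun k => (e k : ℂ)) * Vᴴ := by
    rw [hspec, hVH, hVdef]
    simp only [Matrix.mul_assoc]
  have hQ : ∀ x y, ((UA ⊗ₖ UB)ᴴ * ρ * (UA ⊗ₖ UB)) x y
      = ∑ k, (e k : ℂ) * (V x k * (starRingEnd ℂ) (V y k)) := by
    intro x y; rw [hQdiag]; exact conj_diag_entry V e x y
  set D : (Fin dA × Fin dB) → (Fin dA × Fin dB) → ℝ := fun x k => Complex.normSq (V x k)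
    with hDdef
  set p : (Fin dA × Fin dB) → ℝ := fun x => ∑ k, D x k * e k with hpdef
  have hDnn : ∀ x k, 0 ≤ D x k := fun x k => Complex.normSq_nonneg _
  have hpnn : ∀ x, 0 ≤ p x := fun x => Finset.sum_nonneg fun k _ =>
    mul_nonneg (hDnn x k) (he k)
  have hpQ : ∀ x, ((p x : ℝ) : ℂ) = ((UA ⊗ₖ UB)ᴴ * ρ * (UA ⊗ₖ UB)) x x := by
    intro x
    rw [hQ x x, hpdef]
    push_cast
    refine Finset.sum_congr rfl fun k _ => ?_
    rw [Complex.mul_conj, hDdef]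
    push_cast
    ring
  have hC1 : ∀ x, ∑ k, D x k = 1 := by
    intro x
    have h := congrFun (congrFun hV1 x) x
    simp only [Matrix.mul_apply, Matrix.conjTranspose_apply, Matrix.one_apply_eq] at h
    have h2 : ((∑ k, D x k : ℝ) : ℂ) = 1 := by
      push_cast
      rw [← h]
      refine Finset.sum_congr rfl fun k _ => ?_
      rw [hDdef, ← Complex.mul_conj]
      rfl
    exact_mod_cast h2
  have hC2 : ∀ k, ∑ x, D x k = 1 := by
    intro k
    have h := congrFun (congrFun hV2 k) k
    simp only [Matrix.mul_apply, Matrix.conjTranspose_apply, Matrix.one_apply_eq] at h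
    have h2 : ((∑ x, D x k : ℝ) : ℂ) = 1 := by
      push_cast
      rw [← h]
      refine Finset.sum_congr rfl fun x _ => ?_
      rw [hDdef, mul_comm, ← Complex.mul_conj]
      rfl
    exact_mod_cast h2
  have hsume : ∑ k, e k = 1 := by
    have h := trace_eq_sum_eig hH
    rw [htr] at h
    have : ((∑ k, e k : ℝ) : ℂ) = 1 := by push_cast; rw [← h]
    exact_mod_cast this
  have hsump : ∑ x, p x = 1 := by
    simp only [hpdef]
    rw [Finset.sum_comm]
    calc ∑ k, ∑ x, D x k * e k = ∑ k, (∑ x, D x k) * e k := by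
          exact Finset.sum_congr rfl fun k _ => (Finset.sum_mul ..).symm
      _ = ∑ k, e k := Finset.sum_congr rfl fun k _ => by rw [hC2 k, one_mul]
      _ = 1 := hsume
  have hC3 : ∀ i, ∑ j, p (i, j) = lam i := by
    intro i
    have h1 := margA_conj ρ UA UB hUB1
    have h2 : UAᴴ * margA ρ * UA = Matrix.diagonal (fun i => (lam i : ℂ)) := by
      rw [hspecA, show UAᴴ * (UA * Matrix.diagonal (fun i => (lam i : ℂ)) * UAᴴ) * UA
        = UAᴴ * (UA * (Matrix.diagonal (fun i => (lam i : ℂ)) * (UAᴴ * UA))) from by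
          simp only [Matrix.mul_assoc], hUA2, Matrix.mul_one, ← Matrix.mul_assoc, hUA2,
        Matrix.one_mul]
    have h3 : ((∑ j, p (i, j) : ℝ) : ℂ) = margA ((UA ⊗ₖ UB)ᴴ * ρ * (UA ⊗ₖ UB)) i i := by
      push_cast
      exact Finset.sum_congr rfl fun j _ => hpQ (i, j)
    rw [h1, h2] at h3
    simp only [Matrix.diagonal_apply_eq] at h3
    exact_mod_cast h3
  have hC4 : ∀ j, ∑ i, p (i, j) = mu j := by
    intro j
    have h1 := margB_conj ρ UA UB hUA1
    have h2 : UBᴴ * margB ρ * UB = Matrix.diagonal (fun j => (mu j : ℂ)) := by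
      rw [hspecB, show UBᴴ * (UB * Matrix.diagonal (fun j => (mu j : ℂ)) * UBᴴ) * UB
        = UBᴴ * (UB * (Matrix.diagonal (fun j => (mu j : ℂ)) * (UBᴴ * UB))) from by
          simp only [Matrix.mul_assoc], hUB2, Matrix.mul_one, ← Matrix.mul_assoc, hUB2,
        Matrix.one_mul]
    have h3 : ((∑ i, p (i, j) : ℝ) : ℂ) = margB ((UA ⊗ₖ UB)ᴴ * ρ * (UA ⊗ₖ UB)) j j := by
      push_cast
      exact Finset.sum_congr rfl fun i _ => hpQ (i, j)
    rw [h1, h2] at h3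
    simp only [Matrix.diagonal_apply_eq] at h3
    exact_mod_cast h3
  -- nonnegativity and normalization of marginal eigenvalues
  have hlamnn : ∀ i, 0 ≤ lam i := fun i => (hC3 i) ▸ Finset.sum_nonneg fun j _ => hpnn (i, j)
  have hmunn : ∀ j, 0 ≤ mu j := fun j => (hC4 j) ▸ Finset.sum_nonneg fun i _ => hpnn (i, j)
  have hsumlam : ∑ i, lam i = 1 := by
    calc ∑ i, lam i = ∑ i, ∑ j, p (i, j) := Finset.sum_congr rfl fun i _ => (hC3 i).symm
      _ = ∑ x : Fin dA × Fin dB, p x := by rw [Fintype.sum_prod_type]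
      _ = 1 := hsump
  have hsummu : ∑ j, mu j = 1 := by
    calc ∑ j, mu j = ∑ j, ∑ i, p (i, j) := Finset.sum_congr rfl fun j _ => (hC4 j).symm
      _ = ∑ i, ∑ j, p (i, j) := Finset.sum_comm
      _ = ∑ x : Fin dA × Fin dB, p x := by rw [Fintype.sum_prod_type]
      _ = 1 := hsump
  -- dual vectors
  obtain ⟨x, hx0, hx1, hxA, hxq⟩ := sideA lam hlamnn hsumlam hα
  obtain ⟨y, hy0, hy1, hyB, hyq⟩ := sideA mu hmunn hsummu hα
  -- unfold the goal
  rw [schattenNorm, schattenNorm, schattenNorm, dif_pos hAh, dif_pos hBh, dif_pos hH]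
  rw [← hlamdef, ← hmudef, ← hedef]
  -- main chain
  have hNAeq : (∑ i, lam i ^ α) ^ (1/α) = ∑ z : Fin dA × Fin dB, p z * x z.1 := by
    rw [← hxA]
    calc ∑ i, lam i * x i = ∑ i, ∑ j, p (i, j) * x i := Finset.sum_congr rfl fun i _ => by
          rw [← Finset.sum_mul, hC3 i]
      _ = ∑ z : Fin dA × Fin dB, p z * x z.1 := by rw [Fintype.sum_prod_type]
  have hNBeq : (∑ j, mu j ^ α) ^ (1/α) = ∑ z : Fin dA × Fin dB, p z * y z.2 := by
    rw [← hyB]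
    calc ∑ j, mu j * y j = ∑ j, ∑ i, p (i, j) * y j := Finset.sum_congr rfl fun j _ => by
          rw [← Finset.sum_mul, hC4 j]
      _ = ∑ i, ∑ j, p (i, j) * y j := Finset.sum_comm
      _ = ∑ z : Fin dA × Fin dB, p z * y z.2 := by rw [Fintype.sum_prod_type]
  have step1 : (∑ i, lam i ^ α) ^ (1/α) + (∑ j, mu j ^ α) ^ (1/α)
      ≤ 1 + ∑ z : Fin dA × Fin dB, p z * (x z.1 * y z.2) := by
    rw [hNAeq, hNBeq, ← Finset.sum_add_distrib, ← hsump, ← Finset.sum_add_distrib]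
    refine Finset.sum_le_sum fun z _ => ?_
    have h1 := hx1 z.1; have h2 := hy1 z.2
    have h3 := hx0 z.1; have h4 := hy0 z.2
    have h5 := hpnn z
    nlinarith [mul_nonneg h5 (mul_nonneg (sub_nonneg.mpr h1) (sub_nonneg.mpr h2))]
  -- Hölder
  set q : ℝ := α / (α - 1) with hqdef
  have hpq : α.HolderConjugate q := Real.HolderConjugate.conjExponent hα
  have holder : ∑ z : Fin dA × Fin dB, p z * (x z.1 * y z.2)
      ≤ (∑ z : Fin dA × Fin dB, p z ^ α) ^ (1/α)
        * (∑ z : Fin dA × Fin dB, (x z.1 * y z.2) ^ q) ^ (1/q) :=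
    Real.inner_le_Lp_mul_Lq_of_nonneg Finset.univ hpq (fun z _ => hpnn z)
      (fun z _ => mul_nonneg (hx0 z.1) (hy0 z.2))
  have hxy1 : ∑ z : Fin dA × Fin dB, (x z.1 * y z.2) ^ q = 1 := by
    calc ∑ z : Fin dA × Fin dB, (x z.1 * y z.2) ^ q
        = ∑ i, ∑ j, x i ^ q * y j ^ q := by
          rw [Fintype.sum_prod_type]
          exact Finset.sum_congr rfl fun i _ => Finset.sum_congr rfl fun j _ =>
            Real.mul_rpow (hx0 i) (hy0 j)
      _ = (∑ i, x i ^ q) * (∑ j, y j ^ q) := by rw [Finset.sum_mul_sum]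
      _ = 1 := by rw [hqdef] at *; rw [hxq, hyq, one_mul]
  have hmaj : ∑ z : Fin dA × Fin dB, p z ^ α ≤ ∑ k, e k ^ α := by
    calc ∑ z : Fin dA × Fin dB, p z ^ α ≤ ∑ z : Fin dA × Fin dB, ∑ k, D z k * e k ^ α := by
          refine Finset.sum_le_sum fun z _ => ?_
          rw [hpdef]
          exact Real.rpow_arith_mean_le_arith_mean_rpow Finset.univ (D z) e
            (fun k _ => hDnn z k) (hC1 z) (fun k _ => he k) hα.le
      _ = ∑ k, (∑ z, D z k) * e k ^ α := by
          rw [Finset.sum_comm]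
          exact Finset.sum_congr rfl fun k _ => (Finset.sum_mul ..).symm
      _ = ∑ k, e k ^ α := Finset.sum_congr rfl fun k _ => by rw [hC2 k, one_mul]
  have hmaj' : (∑ z : Fin dA × Fin dB, p z ^ α) ^ (1/α) ≤ (∑ k, e k ^ α) ^ (1/α) :=
    Real.rpow_le_rpow (Finset.sum_nonneg fun z _ => Real.rpow_nonneg (hpnn z) α) hmaj
      (by positivity)
  calc (∑ i, lam i ^ α) ^ (1/α) + (∑ j, mu j ^ α) ^ (1/α)
      ≤ 1 + ∑ z : Fin dA × Fin dB, p z * (x z.1 * y z.2) := step1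
    _ ≤ 1 + (∑ z : Fin dA × Fin dB, p z ^ α) ^ (1/α) := by
        have := holder
        rw [hxy1, Real.one_rpow, mul_one] at this
        linarith
    _ ≤ 1 + (∑ k, e k ^ α) ^ (1/α) := by linarith

end
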